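/- Let T be an x-monotone terrain with n ≥ 2 vertices and suppose g₁ and g₂ are two guards on a horizontal line L(h) above T with x(g₁) < x(g₂) that together cover T. Then x(g₁) ≤ x(f(h)) where f(h) is the leftmost point among the rightmost placements F(e,h) over all edges e of T, where F(e,h) denotes the rightmost point on L(h) from which edge e is fully visible. -/
import Mathlib


open Set

/-- An x-monotone polygonal terrain: vertices `x 0 < x 1 < ⋯ < x N` on the x-axis,
heights given by `f`, which is affine with slope `m i` and intercept `c i` on the
`i`-th edge. -/
structure Terrain where
  N : ℕ
  hN : 1 ≤ N
  x : Fin (N + 1) → ℝ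
  hx : StrictMono x
  f : ℝ → ℝ
  m : Fin N → ℝ
  c : Fin N → ℝ
  haff : ∀ i : Fin N, ∀ t ∈ Set.Icc (x i.castSucc) (x i.succ), f t = m i * t + c i

/-- Left endpoint of the domain of the terrain. -/
def Terrain.a (T : Terrain) : ℝ := T.x 0

/-- Right endpoint of the domain of the terrain. -/
def Terrain.b (T : Terrain) : ℝ := T.x (Fin.last T.N)

/-- Visibility: the segment from terrain point `p` to guard `u` stays on or above
the terrain. -/
def Terrain.Vis (T : Terrain) (p u : ℝ × ℝ) : Prop :=
  ∀ q ∈ segment ℝ p u, q.1 ∈ Set.Icc T.a T.b → T.f q.1 ≤ q.2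


lemma vis_side_right (T : Terrain) (h t s s₂ : ℝ)
    (hth : T.f t ≤ h) (h2 : s ≤ s₂)
    (v2 : T.Vis (t, T.f t) (s₂, h)) :
    ∀ q ∈ segment ℝ (t, T.f t) (s, h), t ≤ q.1 → q.1 ∈ Set.Icc T.a T.b → T.f q.1 ≤ q.2 := by
  intro q hq hqt hq1
  obtain ⟨a, b, ha, hb, hab, hq'⟩ := hq
  have hx1 : q.1 = a * t + b * s := by rw [← hq']; rfl
  have hx2 : q.2 = a * T.f t + b * h := by rw [← hq']; rfl
  have hat : a * t + b * t = t := by rw [← add_mul, hab, one_mul]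
  have haf : a * T.f t + b * T.f t = T.f t := by rw [← add_mul, hab, one_mul]
  rcases le_or_gt s₂ t with hc | hc
  · have hbt : b * s - b * t ≤ 0 := by nlinarith [mul_nonneg hb (by linarith : (0:ℝ) ≤ t - s)]
    have hqe : q.1 = t := by linarith
    rw [hqe]
    have hbh : b * T.f t ≤ b * h := mul_le_mul_of_nonneg_left hth hb
    linarith
  · set μ : ℝ := (q.1 - t) / (s₂ - t) with hμ
    have hst : (0:ℝ) < s₂ - t := by linarith
    have hμ0 : 0 ≤ μ := div_nonneg (by linarith) hst.le
    have hμb : μ ≤ b := by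
      rw [hμ, div_le_iff₀ hst]
      nlinarith [mul_nonneg hb (by linarith : (0:ℝ) ≤ s₂ - s)]
    have hμ1 : μ ≤ 1 := by linarith
    have hseg : (q.1, (1 - μ) * T.f t + μ * h) ∈ segment ℝ (t, T.f t) (s₂, h) := by
      refine ⟨1 - μ, μ, by linarith, hμ0, by ring, ?_⟩
      have hmul : μ * (s₂ - t) = q.1 - t := div_mul_cancel₀ _ hst.ne'
      have hxx : (1 - μ) * t + μ * s₂ = q.1 := by nlinarith [hmul]
      simp [Prod.ext_iff, Prod.smul_def, smul_eq_mul, hxx]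
    have h5 : T.f q.1 ≤ (1 - μ) * T.f t + μ * h := v2 _ hseg hq1
    nlinarith [mul_nonneg (by linarith : (0:ℝ) ≤ b - μ) (by linarith : (0:ℝ) ≤ h - T.f t)]

lemma vis_side_left (T : Terrain) (h t s s₁ : ℝ)
    (hth : T.f t ≤ h) (h1 : s₁ ≤ s)
    (v1 : T.Vis (t, T.f t) (s₁, h)) :
    ∀ q ∈ segment ℝ (t, T.f t) (s, h), q.1 ≤ t → q.1 ∈ Set.Icc T.a T.b → T.f q.1 ≤ q.2 := by
  intro q hq hqt hq1
  obtain ⟨a, b, ha, hb, hab, hq'⟩ := hq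
  have hx1 : q.1 = a * t + b * s := by rw [← hq']; rfl
  have hx2 : q.2 = a * T.f t + b * h := by rw [← hq']; rfl
  have hat : a * t + b * t = t := by rw [← add_mul, hab, one_mul]
  have haf : a * T.f t + b * T.f t = T.f t := by rw [← add_mul, hab, one_mul]
  rcases le_or_gt t s₁ with hc | hc
  · have hbt : 0 ≤ b * s - b * t := by nlinarith [mul_nonneg hb (by linarith : (0:ℝ) ≤ s - t)]
    have hqe : q.1 = t := by linarith
    rw [hqe]
    have hbh : b * T.f t ≤ b * h := mul_le_mul_of_nonneg_left hth hb
    linarith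
  · set μ : ℝ := (q.1 - t) / (s₁ - t) with hμ
    have hst : s₁ - t < 0 := by linarith
    have hμ0 : 0 ≤ μ := div_nonneg_iff.2 (Or.inr ⟨by linarith, hst.le⟩)
    have hμb : μ ≤ b := by
      rw [hμ, div_le_iff_of_neg hst]
      nlinarith [mul_nonneg hb (by linarith : (0:ℝ) ≤ s - s₁)]
    have hμ1 : μ ≤ 1 := by linarith
    have hseg : (q.1, (1 - μ) * T.f t + μ * h) ∈ segment ℝ (t, T.f t) (s₁, h) := by
      refine ⟨1 - μ, μ, by linarith, hμ0, by ring, ?_⟩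
      have hmul : μ * (s₁ - t) = q.1 - t := div_mul_cancel₀ _ hst.ne
      have hxx : (1 - μ) * t + μ * s₁ = q.1 := by nlinarith [hmul]
      simp [Prod.ext_iff, Prod.smul_def, smul_eq_mul, hxx]
    have h5 : T.f q.1 ≤ (1 - μ) * T.f t + μ * h := v1 _ hseg hq1
    nlinarith [mul_nonneg (by linarith : (0:ℝ) ≤ b - μ) (by linarith : (0:ℝ) ≤ h - T.f t)]

lemma vis_convex (T : Terrain) (h t s s₁ s₂ : ℝ)
    (hth : T.f t ≤ h) (h1 : s₁ ≤ s) (h2 : s ≤ s₂)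
    (v1 : T.Vis (t, T.f t) (s₁, h)) (v2 : T.Vis (t, T.f t) (s₂, h)) :
    T.Vis (t, T.f t) (s, h) := by
  intro q hq hq1
  rcases le_or_gt t q.1 with hc | hc
  · exact vis_side_right T h t s s₂ hth h2 v2 q hq hc hq1
  · exact vis_side_left T h t s s₁ hth h1 v1 q hq hc.le hq1

/-- Full visibility of the `i`-th edge from the point `u`. -/
def Terrain.EdgeVis (T : Terrain) (i : Fin T.N) (u : ℝ × ℝ) : Prop :=
  ∀ t ∈ Set.Icc (T.x i.castSucc) (T.x i.succ), T.Vis (t, T.f t) u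

/-- If two guards `g₁, g₂` on `L(h)` with `x(g₁) < x(g₂)` cover `T`, then
`x(g₁) ≤ x(f(h))`, where `f(h)` is the leftmost among the rightmost placements
`F(e,h)` over all edges `e`; i.e. `x(g₁) ≤ F(e,h)` for every edge `e`. -/
theorem stmt6 (T : Terrain) (h : ℝ)
    (hh : ∀ t ∈ Set.Icc T.a T.b, T.f t ≤ h)
    (F : Fin T.N → ℝ)
    (hFvis : ∀ i, T.EdgeVis i (F i, h))
    (hFmax : ∀ i, ∀ p : ℝ, T.EdgeVis i (p, h) → p ≤ F i)
    (g₁ g₂ : ℝ × ℝ) (hg₁ : g₁.2 = h) (hg₂ : g₂.2 = h) (hg : g₁.1 < g₂.1)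
    (hcover : ∀ t ∈ Set.Icc T.a T.b, T.Vis (t, T.f t) g₁ ∨ T.Vis (t, T.f t) g₂) :
    ∀ i : Fin T.N, g₁.1 ≤ F i := by
  intro i
  by_contra hlt
  push_neg at hlt
  have e1 : (g₁.1, h) = g₁ := by rw [← hg₁]
  have e2 : (g₂.1, h) = g₂ := by rw [← hg₂]
  have hEdge : T.EdgeVis i (g₁.1, h) := by
    intro t ht
    have htab : t ∈ Set.Icc T.a T.b :=
      ⟨le_trans (T.hx.monotone (Fin.zero_le _)) ht.1,
       le_trans ht.2 (T.hx.monotone (Fin.le_last _))⟩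
    rcases hcover t htab with hv | hv
    · rw [e1]; exact hv
    · exact vis_convex T h t g₁.1 (F i) g₂.1 (hh t htab) hlt.le hg.le
        (hFvis i t ht) (e2 ▸ hv)
  exact absurd (hFmax i g₁.1 hEdge) (not_le.2 hlt)
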